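/- Let H ≤ GL₂⁺(ℚ) be a subgroup and let D(H) ⊆ 𝒫(ℚ) be a set of representatives of the H-orbits of 𝒫(ℚ). Let c be a 1-cocycle of H with values in V which vanishes on the stabilizer in H of every element of D(H). Then there exists Ψ ∈ Hom_H(Ξ₀, V) such that Ψ([Z, γ⁻¹·Z]) = c(γ) for every γ ∈ H and every Z ∈ D(H). If moreover H acts transitively on 𝒫(ℚ), then Ψ is unique. -/

import Mathlib

noncomputable section

open scoped MatrixGroups

/-- The projective line over `ℚ`, i.e. `P¹(ℚ)`. -/
abbrev P1 : Type := Projectivization ℚ (Fin 2 → ℚ)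

namespace PaperMS

/-- The linear automorphism of `ℚ²` attached to `γ ∈ GL₂(ℚ)`. -/
def glEquiv (γ : GL (Fin 2) ℚ) : (Fin 2 → ℚ) ≃ₗ[ℚ] (Fin 2 → ℚ) :=
  LinearMap.GeneralLinearGroup.generalLinearEquiv ℚ (Fin 2 → ℚ)
    (Matrix.GeneralLinearGroup.toLin γ)

lemma glEquiv_one : glEquiv 1 = LinearEquiv.refl ℚ (Fin 2 → ℚ) := by
  simp only [glEquiv, map_one]
  rfl

lemma glEquiv_mul (γ δ : GL (Fin 2) ℚ) :
    glEquiv (γ * δ) = (glEquiv δ).trans (glEquiv γ) := by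
  simp only [glEquiv, map_mul]
  rfl

/-- The Möbius action of `GL₂(ℚ)` on `P¹(ℚ)`. -/
instance : MulAction (GL (Fin 2) ℚ) P1 where
  smul γ := Projectivization.map (glEquiv γ).toLinearMap (glEquiv γ).injective
  one_smul x := by
    induction x using Projectivization.ind with
    | h v hv =>
      show Projectivization.map _ _ _ = _
      rw [Projectivization.map_mk]
      simp [glEquiv_one]
  mul_smul γ δ x := by
    induction x using Projectivization.ind with
    | h v hv =>
      show Projectivization.map _ _ _ =
        Projectivization.map _ _ (Projectivization.map _ _ _)
      rw [Projectivization.map_mk, Projectivization.map_mk, Projectivization.map_mk]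
      simp [glEquiv_mul]

lemma smul_P1_def (γ : GL (Fin 2) ℚ) (x : P1) :
    γ • x = Projectivization.map (glEquiv γ).toLinearMap (glEquiv γ).injective x := rfl

/-- The point of `P¹(ℚ)` attached to a rational number. -/
def ptQ (x : ℚ) : P1 :=
  Projectivization.mk ℚ ![x, 1] (by
    intro h
    have := congrFun h 1
    simp at this)

/-- The point `∞` of `P¹(ℚ)`. -/
def ptInf : P1 :=
  Projectivization.mk ℚ ![1, 0] (by
    intro h
    have := congrFun h 0
    simp at this)

lemma ptQ_ne_ptInf (x : ℚ) : ptQ x ≠ ptInf := by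
  intro h
  rw [ptQ, ptInf, Projectivization.mk_eq_mk_iff] at h
  obtain ⟨a, ha⟩ := h
  have := congrFun ha 1
  simp at this

/-- The set `𝒫(ℚ)` of infinitesimal cusps `π_r(s)`: ordered pairs of distinct
points of `P¹(ℚ)`; the symbol `π_r(s)` corresponds to the pair `(r, s)`. -/
def PP : Type := {p : P1 × P1 // p.1 ≠ p.2}

/-- The infinitesimal cusp `π_r(s)`. -/
def pi' (r s : P1) (h : r ≠ s) : PP := ⟨(r, s), h⟩

instance : MulAction (GL (Fin 2) ℚ) PP where
  smul γ p := ⟨(γ • p.val.1, γ • p.val.2), fun h => p.prop (MulAction.injective γ h)⟩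
  one_smul p := by
    apply Subtype.ext
    show (((1 : GL (Fin 2) ℚ) • p.val.1, (1 : GL (Fin 2) ℚ) • p.val.2) : P1 × P1) = p.val
    simp
  mul_smul γ δ p := by
    apply Subtype.ext
    show ((((γ * δ) : GL (Fin 2) ℚ) • p.val.1, ((γ * δ) : GL (Fin 2) ℚ) • p.val.2) : P1 × P1) = _
    simp [mul_smul]
    rfl

/-- `Ξ`, the group of divisors on `𝒫(ℚ)`. -/
abbrev Xi : Type := PP →₀ ℤ

/-- `Δ`, the group of divisors on `P¹(ℚ)`. -/
abbrev Delta : Type := P1 →₀ ℤ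

/-- `GL₂(ℚ)` acts on divisors on `𝒫(ℚ)`. -/
instance : MulAction (GL (Fin 2) ℚ) Xi where
  smul γ v := Finsupp.mapDomain (γ • ·) v
  one_smul v := by
    show Finsupp.mapDomain _ _ = _
    simp only [one_smul]
    exact Finsupp.mapDomain_id
  mul_smul γ δ v := by
    show Finsupp.mapDomain _ _ = Finsupp.mapDomain _ (Finsupp.mapDomain _ _)
    rw [← Finsupp.mapDomain_comp]
    congr 1
    funext x
    simp [mul_smul]

/-- `GL₂(ℚ)` acts on divisors on `P¹(ℚ)`. -/
instance : MulAction (GL (Fin 2) ℚ) Delta where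
  smul γ v := Finsupp.mapDomain (γ • ·) v
  one_smul v := by
    show Finsupp.mapDomain _ _ = _
    simp only [one_smul]
    exact Finsupp.mapDomain_id
  mul_smul γ δ v := by
    show Finsupp.mapDomain _ _ = Finsupp.mapDomain _ (Finsupp.mapDomain _ _)
    rw [← Finsupp.mapDomain_comp]
    congr 1
    funext x
    simp [mul_smul]

/-- The degree of a divisor on `𝒫(ℚ)`. -/
def degXi : Xi →+ ℤ := Finsupp.liftAddHom fun _ => AddMonoidHom.id ℤ

/-- The degree of a divisor on `P¹(ℚ)`. -/
def degDelta : Delta →+ ℤ := Finsupp.liftAddHom fun _ => AddMonoidHom.id ℤ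

/-- `Ξ₀`, the subgroup of degree-zero divisors on `𝒫(ℚ)`. -/
def Xi0 : AddSubgroup Xi := degXi.ker

/-- `Δ₀`, the subgroup of degree-zero divisors on `P¹(ℚ)`. -/
def Delta0 : AddSubgroup Delta := degDelta.ker

/-- The divisor attached to a point of `𝒫(ℚ)`. -/
def dv (p : PP) : Xi := Finsupp.single p 1

/-- The divisor attached to a point of `P¹(ℚ)`. -/
def dvP (r : P1) : Delta := Finsupp.single r 1

/-- `[c₁, c₂] = {c₂} - {c₁} ∈ Ξ₀`. -/
def br (c₁ c₂ : PP) : Xi := dv c₂ - dv c₁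

/-- The modular symbol `{r, s} = [π_r(s), π_s(r)]`. -/
def msym (r s : P1) (h : r ≠ s) : Xi := br (pi' r s h) (pi' s r h.symm)

/-- The infinitesimal symbol `[s, t]_r = [π_r(s), π_r(t)]`. -/
def isym (r s t : P1) (hs : s ≠ r) (ht : t ≠ r) : Xi :=
  br (pi' r s hs.symm) (pi' r t ht.symm)

lemma degXi_single (p : PP) (n : ℤ) : degXi (Finsupp.single p n) = n := by
  simp [degXi]

lemma degDelta_single (r : P1) (n : ℤ) : degDelta (Finsupp.single r n) = n := by
  simp [degDelta]

lemma br_mem_Xi0 (c₁ c₂ : PP) : br c₁ c₂ ∈ Xi0 := by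
  simp [br, Xi0, AddMonoidHom.mem_ker, dv, degXi_single]

lemma smul_mem_Xi0 (γ : GL (Fin 2) ℚ) {v : Xi} (hv : v ∈ Xi0) : γ • v ∈ Xi0 := by
  have h : degXi (γ • v) = degXi v := by
    show degXi (Finsupp.mapDomain (γ • ·) v) = degXi v
    simp only [degXi, Finsupp.liftAddHom_apply]
    exact Finsupp.sum_mapDomain_index (fun _ => rfl) (fun _ _ _ => rfl)
  simpa [Xi0, AddMonoidHom.mem_ker, h] using hv

lemma smul_mem_Delta0 (γ : GL (Fin 2) ℚ) {v : Delta} (hv : v ∈ Delta0) : γ • v ∈ Delta0 := by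
  have h : degDelta (γ • v) = degDelta v := by
    show degDelta (Finsupp.mapDomain (γ • ·) v) = degDelta v
    simp only [degDelta, Finsupp.liftAddHom_apply]
    exact Finsupp.sum_mapDomain_index (fun _ => rfl) (fun _ _ _ => rfl)
  simpa [Delta0, AddMonoidHom.mem_ker, h] using hv

lemma brP_mem_Delta0 (r s : P1) : dvP s - dvP r ∈ Delta0 := by
  simp [Delta0, AddMonoidHom.mem_ker, dvP, degDelta_single]

/-- The boundary map `∂ : Ξ → Δ`, induced by `π_r(s) ↦ r`. -/
def bdry : Xi →+ Delta := Finsupp.mapDomain.addMonoidHom fun p : PP => p.val.1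

/-- The embedding of `SL₂(ℤ)` in `GL₂(ℚ)`. -/
def toGLQ : SL(2, ℤ) →* GL (Fin 2) ℚ :=
  Matrix.SpecialLinearGroup.toGL.comp (Matrix.SpecialLinearGroup.map (Int.castRingHom ℚ))

end PaperMS

namespace PaperMS

set_option maxHeartbeats 1000000

/-- Let `H ≤ GL₂⁺(ℚ)` and let `D ⊆ 𝒫(ℚ)` be a set of representatives of
the `H`-orbits of `𝒫(ℚ)`.  Let `c` be a `1`-cocycle of `H` with values in a right
`GL₂⁺(ℚ)`-module `V` which vanishes on the stabilizer in `H` of every element of `D`.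
Then there exists `Ψ ∈ Hom_H(Ξ₀, V)` with `Ψ([Z, γ⁻¹·Z]) = c(γ)` for every `γ ∈ H` and
every `Z ∈ D`; and if `H` acts transitively on `𝒫(ℚ)`, such a `Ψ` is unique. -/
theorem statement5 (V : Type*) [AddCommGroup V] [Module ℚ V]
    (act : Matrix.GLPos (Fin 2) ℚ → V →ₗ[ℚ] V)
    (hact_one : act 1 = LinearMap.id)
    (hact_mul : ∀ γ δ : Matrix.GLPos (Fin 2) ℚ, act (γ * δ) = (act δ).comp (act γ))
    (H : Subgroup (Matrix.GLPos (Fin 2) ℚ))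
    (D : Set PP)
    (hD_surj : ∀ Z : PP, ∃ Z₀ ∈ D, ∃ γ ∈ H, (γ : GL (Fin 2) ℚ) • Z₀ = Z)
    (hD_inj : ∀ Z₁ ∈ D, ∀ Z₂ ∈ D, (∃ γ ∈ H, (γ : GL (Fin 2) ℚ) • Z₁ = Z₂) → Z₁ = Z₂)
    (c : H → V)
    (hc : ∀ γ δ : H, c (γ * δ) = act δ (c γ) + c δ)
    (hstab : ∀ Z ∈ D, ∀ γ : H,
      ((γ : Matrix.GLPos (Fin 2) ℚ) : GL (Fin 2) ℚ) • Z = Z → c γ = 0) :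
    ∃ Ψ : Xi0 →+ V,
      ((∀ (γ : H) (x : Xi0),
          Ψ ⟨((γ : Matrix.GLPos (Fin 2) ℚ) : GL (Fin 2) ℚ) • (x : Xi),
              smul_mem_Xi0 _ x.prop⟩
            = act ((γ⁻¹ : H) : Matrix.GLPos (Fin 2) ℚ) (Ψ x)) ∧
        ∀ (γ : H), ∀ Z ∈ D,
          Ψ ⟨br Z ((((γ⁻¹ : H) : Matrix.GLPos (Fin 2) ℚ) : GL (Fin 2) ℚ) • Z),
              br_mem_Xi0 _ _⟩ = c γ) ∧
      ((∀ Z₁ Z₂ : PP, ∃ γ ∈ H, (γ : GL (Fin 2) ℚ) • Z₁ = Z₂) →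
        ∀ Ψ' : Xi0 →+ V,
          ((∀ (γ : H) (x : Xi0),
              Ψ' ⟨((γ : Matrix.GLPos (Fin 2) ℚ) : GL (Fin 2) ℚ) • (x : Xi),
                  smul_mem_Xi0 _ x.prop⟩
                = act ((γ⁻¹ : H) : Matrix.GLPos (Fin 2) ℚ) (Ψ' x)) ∧
            ∀ (γ : H), ∀ Z ∈ D,
              Ψ' ⟨br Z ((((γ⁻¹ : H) : Matrix.GLPos (Fin 2) ℚ) : GL (Fin 2) ℚ) • Z),
                  br_mem_Xi0 _ _⟩ = c γ) →
          Ψ' = Ψ) := by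
  classical
  have hc1 : c 1 = 0 := by
    have h := hc 1 1
    rw [mul_one] at h
    simp only [OneMemClass.coe_one, hact_one, LinearMap.id_coe, id_eq] at h
    exact right_eq_add.mp h
  choose Z₀ hZ₀D g hgH hg using hD_surj
  set gH : PP → H := fun Z => ⟨g Z, hgH Z⟩ with hgHdef
  set f : PP → V := fun Z => c (gH Z)⁻¹ with hfdef
  have hf_eq : ∀ (Z W : PP), W ∈ D → ∀ γ : H,
      ((γ : Matrix.GLPos (Fin 2) ℚ) : GL (Fin 2) ℚ) • W = Z → f Z = c γ⁻¹ := by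
    intro Z W hW γ hγZ
    have hσsmul : ((((gH Z)⁻¹ * γ : H) : Matrix.GLPos (Fin 2) ℚ) : GL (Fin 2) ℚ) • W
        = Z₀ Z := by
      have hco : ((((gH Z)⁻¹ * γ : H) : Matrix.GLPos (Fin 2) ℚ) : GL (Fin 2) ℚ)
          = ((g Z : GL (Fin 2) ℚ))⁻¹ * ((γ : Matrix.GLPos (Fin 2) ℚ) : GL (Fin 2) ℚ) := rfl
      rw [hco, mul_smul, hγZ, inv_smul_eq_iff]
      exact (hg Z).symm
    have hWZ : W = Z₀ Z :=
      hD_inj W hW (Z₀ Z) (hZ₀D Z) ⟨_, ((gH Z)⁻¹ * γ : H).2, hσsmul⟩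
    have hσ0 : c ((gH Z)⁻¹ * γ) = 0 := by
      apply hstab W hW
      rw [hσsmul, ← hWZ]
    have hσ0' : c ((gH Z)⁻¹ * γ)⁻¹ = 0 := by
      have h := hc ((gH Z)⁻¹ * γ) ((gH Z)⁻¹ * γ)⁻¹
      rw [mul_inv_cancel, hc1, hσ0, map_zero, zero_add] at h
      exact h.symm
    have hdecomp : γ⁻¹ = ((gH Z)⁻¹ * γ)⁻¹ * (gH Z)⁻¹ := by group
    show c (gH Z)⁻¹ = c γ⁻¹
    rw [hdecomp, hc, hσ0', map_zero, zero_add]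
  have hf_smul : ∀ (γ : H) (p : PP),
      f (((γ : Matrix.GLPos (Fin 2) ℚ) : GL (Fin 2) ℚ) • p)
        = act ((γ⁻¹ : H) : Matrix.GLPos (Fin 2) ℚ) (f p) + c γ⁻¹ := by
    intro γ p
    have hs : (((γ * gH p : H) : Matrix.GLPos (Fin 2) ℚ) : GL (Fin 2) ℚ) • Z₀ p
        = ((γ : Matrix.GLPos (Fin 2) ℚ) : GL (Fin 2) ℚ) • p := by
      have hco : (((γ * gH p : H) : Matrix.GLPos (Fin 2) ℚ) : GL (Fin 2) ℚ)
          = ((γ : Matrix.GLPos (Fin 2) ℚ) : GL (Fin 2) ℚ) * (g p : GL (Fin 2) ℚ) := rfl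
      rw [hco, mul_smul, hg p]
    have h1 := hf_eq _ (Z₀ p) (hZ₀D p) (γ * gH p) hs
    rw [h1, mul_inv_rev, hc]
  set F : Xi →+ V := Finsupp.liftAddHom (fun p => (zmultiplesHom V) (f p)) with hFdef
  have hF_single : ∀ (p : PP) (n : ℤ), F (Finsupp.single p n) = n • f p := by
    intro p n
    rw [hFdef, Finsupp.liftAddHom_apply_single]
    rfl
  have hF_sum : ∀ w : Xi, F w = w.sum fun p n => n • f p := by
    intro w
    conv_lhs => rw [← Finsupp.sum_single w]
    rw [map_finsuppSum]
    exact Finsupp.sum_congr fun p _ => hF_single p (w p)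
  have hdeg : ∀ w : Xi, degXi w = w.sum fun _ n => n := by
    intro w
    conv_lhs => rw [← Finsupp.sum_single w]
    rw [map_finsuppSum]
    exact Finsupp.sum_congr fun p _ => degXi_single p (w p)
  set Ψ : Xi0 →+ V := F.comp Xi0.subtype with hΨdef
  have hΨ_apply : ∀ x : Xi0, Ψ x = F (x : Xi) := fun x => rfl
  have hP1 : ∀ (γ : H) (x : Xi0),
      Ψ ⟨((γ : Matrix.GLPos (Fin 2) ℚ) : GL (Fin 2) ℚ) • (x : Xi),
          smul_mem_Xi0 _ x.prop⟩
        = act ((γ⁻¹ : H) : Matrix.GLPos (Fin 2) ℚ) (Ψ x) := by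
    intro γ x
    have hx0 : (x : Xi).sum (fun _ n => n) = 0 := by
      have hxk : degXi (x : Xi) = 0 := AddMonoidHom.mem_ker.mp x.prop
      rw [← hdeg]; exact hxk
    show F (((γ : Matrix.GLPos (Fin 2) ℚ) : GL (Fin 2) ℚ) • (x : Xi)) = _
    have hmap : ((γ : Matrix.GLPos (Fin 2) ℚ) : GL (Fin 2) ℚ) • (x : Xi)
        = Finsupp.mapDomain (((γ : Matrix.GLPos (Fin 2) ℚ) : GL (Fin 2) ℚ) • ·)
            (x : Xi) := rfl
    rw [hmap, hF_sum,
      Finsupp.sum_mapDomain_index (fun b => zero_smul ℤ (f _))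
        (fun b m₁ m₂ => add_smul m₁ m₂ (f _))]
    have hterm : ∀ p (n : ℤ),
        n • f (((γ : Matrix.GLPos (Fin 2) ℚ) : GL (Fin 2) ℚ) • p)
          = act ((γ⁻¹ : H) : Matrix.GLPos (Fin 2) ℚ) (n • f p) + n • c γ⁻¹ := by
      intro p n
      rw [hf_smul, smul_add, map_zsmul]
    rw [Finsupp.sum_congr (g2 := fun p n =>
      act ((γ⁻¹ : H) : Matrix.GLPos (Fin 2) ℚ) (n • f p) + n • c γ⁻¹)
      fun p _ => hterm p ((x : Xi) p)]
    rw [Finsupp.sum, Finset.sum_add_distrib, ← map_sum, ← Finset.sum_smul]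
    have h2 : (∑ p ∈ (x : Xi).support, (x : Xi) p) = 0 := hx0
    rw [h2, zero_smul, add_zero, hΨ_apply, hF_sum, Finsupp.sum]
  have hP2 : ∀ (γ : H), ∀ Z ∈ D,
      Ψ ⟨br Z ((((γ⁻¹ : H) : Matrix.GLPos (Fin 2) ℚ) : GL (Fin 2) ℚ) • Z),
          br_mem_Xi0 _ _⟩ = c γ := by
    intro γ Z hZ
    show F (br Z _) = c γ
    rw [br]
    show F (Finsupp.single _ 1 - Finsupp.single Z 1) = c γ
    rw [map_sub, hF_single, hF_single, one_smul, one_smul]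
    have h1 : f ((((γ⁻¹ : H) : Matrix.GLPos (Fin 2) ℚ) : GL (Fin 2) ℚ) • Z) = c γ := by
      have h := hf_eq _ Z hZ γ⁻¹ rfl
      rwa [inv_inv] at h
    have h2 : f Z = 0 := by
      have h := hf_eq Z Z hZ 1 (by
        show (((1 : H) : Matrix.GLPos (Fin 2) ℚ) : GL (Fin 2) ℚ) • Z = Z
        simp)
      rw [h, inv_one, hc1]
    rw [h1, h2, sub_zero]
  refine ⟨Ψ, ⟨hP1, hP2⟩, ?_⟩
  intro htrans Ψ' hΨ'
  obtain ⟨h1', h2'⟩ := hΨ'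
  set p0 : PP := ⟨(ptQ 0, ptInf), ptQ_ne_ptInf 0⟩ with hp0def
  set Zs : PP := Z₀ p0 with hZsdef
  have hZs : Zs ∈ D := hZ₀D p0
  set e : PP → Xi0 := fun p => ⟨br Zs p, br_mem_Xi0 _ _⟩ with hedef
  have key : ∀ p : PP, Ψ' (e p) = Ψ (e p) := by
    intro p
    obtain ⟨γ₀, hγ₀H, hγ₀⟩ := htrans p Zs
    set γ : H := ⟨γ₀, hγ₀H⟩ with hγdef
    have hp : (((γ⁻¹ : H) : Matrix.GLPos (Fin 2) ℚ) : GL (Fin 2) ℚ) • Zs = p := by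
      have hco : (((γ⁻¹ : H) : Matrix.GLPos (Fin 2) ℚ) : GL (Fin 2) ℚ)
          = ((γ₀ : GL (Fin 2) ℚ))⁻¹ := rfl
      rw [hco, inv_smul_eq_iff]
      exact hγ₀.symm
    have hee : (⟨br Zs ((((γ⁻¹ : H) : Matrix.GLPos (Fin 2) ℚ) : GL (Fin 2) ℚ) • Zs),
        br_mem_Xi0 _ _⟩ : Xi0) = e p := by
      apply Subtype.ext
      show br Zs ((((γ⁻¹ : H) : Matrix.GLPos (Fin 2) ℚ) : GL (Fin 2) ℚ) • Zs) = br Zs p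
      rw [hp]
    have hA := h2' γ Zs hZs
    have hB := hP2 γ Zs hZs
    rw [hee] at hA hB
    rw [hA, hB]
  have hdecomp : ∀ x : Xi0, x = (x : Xi).sum fun p n => n • e p := by
    intro x
    have hx0 : (x : Xi).sum (fun _ n => n) = 0 := by
      have hxk : degXi (x : Xi) = 0 := AddMonoidHom.mem_ker.mp x.prop
      rw [← hdeg]; exact hxk
    have hxi : ((x : Xi).sum fun p n => n • (e p : Xi)) = (x : Xi) := by
      have hterm : ∀ (p : PP) (n : ℤ),
          n • (e p : Xi) = Finsupp.single p n - n • dv Zs := by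
        intro p n
        show n • (dv p - dv Zs) = _
        rw [smul_sub, dv, Finsupp.smul_single, smul_eq_mul, mul_one]
      rw [Finsupp.sum_congr (g2 := fun p n => Finsupp.single p n - n • dv Zs)
        fun p _ => hterm p ((x : Xi) p)]
      rw [Finsupp.sum, Finset.sum_sub_distrib, ← Finset.sum_smul]
      have h1 : (∑ p ∈ (x : Xi).support, Finsupp.single p ((x : Xi) p)) = (x : Xi) :=
        Finsupp.sum_single (x : Xi)
      have h2 : (∑ p ∈ (x : Xi).support, (x : Xi) p) = 0 := hx0
      rw [h1, h2, zero_smul, sub_zero]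
    apply Subtype.ext
    show (x : Xi) = Xi0.subtype ((x : Xi).sum fun p n => n • e p)
    rw [map_finsuppSum]
    rw [Finsupp.sum_congr (g2 := fun p n => n • Xi0.subtype (e p))
      fun p _ => map_zsmul Xi0.subtype ((x : Xi) p) (e p)]
    exact hxi.symm
  ext x
  rw [hdecomp x, map_finsuppSum, map_finsuppSum]
  exact Finsupp.sum_congr fun p _ => by rw [map_zsmul, map_zsmul, key p]

end PaperMS
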